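/- For the regularized gap function f_α(x) = −⟨F(x), H_α(x) − x⟩ − (α/2)‖H_α(x) − x‖², where H_α(x) = P_C(x − α⁻¹F(x)), one has f_α(x) ≥ 0 for every x ∈ C, and f_α(x) = 0 if and only if x solves VIP(F,C). -/

import Mathlib

open scoped RealInnerProductSpace

lemma proj_vi {E : Type*} [NormedAddCommGroup E] [InnerProductSpace ℝ E]
    {C : Set E} (hconv : Convex ℝ C) {p z : E} (hp : p ∈ C)
    (hmin : ∀ y ∈ C, ‖p - z‖ ≤ ‖y - z‖) :
    ∀ w ∈ C, ⟪z - p, w - p⟫ ≤ 0 := by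
  haveI : Nonempty C := ⟨⟨p, hp⟩⟩
  have h : ‖z - p‖ = ⨅ w : C, ‖z - w‖ := by
    refine le_antisymm (le_ciInf fun w => ?_) (ciInf_le (f := fun w : C => ‖z - (w : E)‖) ⟨0, ?_⟩ ⟨p, hp⟩)
    · rw [norm_sub_rev, norm_sub_rev z (w : E)]
      exact hmin w w.2
    · rintro _ ⟨w, rfl⟩; positivity
  exact (norm_eq_iInf_iff_real_inner_le_zero hconv hp).1 h

/-- The regularized gap function
`f_α(x) = -⟪F x, H_α x - x⟫ - (α/2)‖H_α x - x‖²`, `H_α x = P_C (x - α⁻¹ F x)`,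
is nonnegative on `C`, and vanishes at `x ∈ C` iff `x` solves VIP(F,C). -/
theorem gap_function_nonneg_and_zero_iff {n : ℕ}
    (C : Set (EuclideanSpace ℝ (Fin n))) (hne : C.Nonempty) (hcl : IsClosed C)
    (hconv : Convex ℝ C)
    (F : EuclideanSpace ℝ (Fin n) → EuclideanSpace ℝ (Fin n)) (hF : Continuous F)
    (P : EuclideanSpace ℝ (Fin n) → EuclideanSpace ℝ (Fin n))
    (hPmem : ∀ x, P x ∈ C)
    (hPmin : ∀ x, ∀ y ∈ C, ‖P x - x‖ ≤ ‖y - x‖)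
    (α : ℝ) (hα : 0 < α)
    (H : EuclideanSpace ℝ (Fin n) → EuclideanSpace ℝ (Fin n))
    (hH : ∀ x, H x = P (x - α⁻¹ • F x))
    (f : EuclideanSpace ℝ (Fin n) → ℝ)
    (hf : ∀ x, f x = -⟪F x, H x - x⟫ - (α / 2) * ‖H x - x‖ ^ 2) :
    ∀ x ∈ C, 0 ≤ f x ∧ (f x = 0 ↔ ∀ y ∈ C, 0 ≤ ⟪F x, y - x⟫) := by
  intro x hx
  set z : EuclideanSpace ℝ (Fin n) := x - α⁻¹ • F x with hz
  have hHC : H x ∈ C := by rw [hH x]; exact hPmem z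
  have hvi : ∀ w ∈ C, ⟪z - H x, w - H x⟫ ≤ 0 := by
    rw [hH x]
    exact proj_vi hconv (hPmem z) (fun y hy => hPmin z y hy)
  have key : α⁻¹ * ⟪F x, H x - x⟫ + ‖H x - x‖ ^ 2 ≤ 0 := by
    have h := hvi x hx
    have hzx : z - H x = -(α⁻¹ • F x) - (H x - x) := by rw [hz]; abel
    rw [hzx] at h
    have hexp : ∀ d : EuclideanSpace ℝ (Fin n),
        ⟪-(α⁻¹ • F x) - d, -d⟫ = α⁻¹ * ⟪F x, d⟫ + ‖d‖ ^ 2 := by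
      intro d
      simp only [inner_neg_right, inner_sub_left, inner_neg_left, real_inner_smul_left,
        real_inner_self_eq_norm_sq]
      ring
    have hxH : (x : EuclideanSpace ℝ (Fin n)) - H x = -(H x - x) := by abel
    rw [hxH, hexp (H x - x)] at h
    exact h
  have keyF : ⟪F x, H x - x⟫ ≤ -(α * ‖H x - x‖ ^ 2) := by
    have h2 := mul_le_mul_of_nonneg_left key hα.le
    have hαinv : α * α⁻¹ = 1 := mul_inv_cancel₀ hα.ne'
    rw [mul_zero, mul_add, ← mul_assoc, hαinv, one_mul] at h2
    linarith
  have hlow : (α / 2) * ‖H x - x‖ ^ 2 ≤ f x := by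
    rw [hf x]; nlinarith
  have hnonneg : 0 ≤ f x := by
    have : 0 ≤ (α / 2) * ‖H x - x‖ ^ 2 := by positivity
    linarith
  refine ⟨hnonneg, ?_, ?_⟩
  · intro hfx
    have hd : ‖H x - x‖ ^ 2 = 0 := by
      have : 0 ≤ (α / 2) * ‖H x - x‖ ^ 2 := by positivity
      nlinarith
    have hHx : H x = x := by
      have h0 : ‖H x - x‖ = 0 := pow_eq_zero_iff (n := 2) (by norm_num) |>.1 hd
      exact sub_eq_zero.1 (norm_eq_zero.1 h0)
    intro w hw
    have h := hvi w hw
    rw [hHx, hz] at h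
    have hzx : x - α⁻¹ • F x - x = -(α⁻¹ • F x) := by abel
    rw [hzx, inner_neg_left, real_inner_smul_left] at h
    have hαinv : 0 < α⁻¹ := inv_pos.2 hα
    nlinarith
  · intro hvip
    have h1 : 0 ≤ ⟪F x, H x - x⟫ := hvip (H x) hHC
    have h2 : f x ≤ 0 := by
      rw [hf x]
      have : 0 ≤ (α / 2) * ‖H x - x‖ ^ 2 := by positivity
      linarith
    linarith
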